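/- For the two-dimensional birth-death process on ℤ² with constant rates satisfying λ₁/λ₂ = μ₂/μ₁ = ξ, and k with k₂ ≠ k₁+r, the first-passage density through the line x₂ = x₁+r satisfies the quasi-symmetry h_r(t | k₂−r, k₁+r) = ξ^{k₁+r−k₂} h_r(t | k), where h_r(t|k) = (|k₂−k₁−r|/t) P{X₂(t) = X₁(t)+r | X(0)=k}. -/

import Mathlib

/-- The modified Bessel function of the first kind of integer order
(`besselI (-m) = besselI m`). -/
noncomputable def besselI (m : ℤ) (x : ℝ) : ℝ :=
  ∑' i : ℕ, (x / 2) ^ (m.natAbs + 2 * i) /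
    ((Nat.factorial i : ℝ) * (Nat.factorial (m.natAbs + i) : ℝ))

/-- Transition probabilities of the two-dimensional birth-death process on `ℤ²`
with constant rates. -/
noncomputable def P2 (lam1 mu1 lam2 mu2 : ℝ) (k1 k2 n1 n2 : ℤ) (t : ℝ) : ℝ :=
  (Real.exp (-(lam1 + mu1) * t) * besselI (n1 - k1) (2 * Real.sqrt (lam1 * mu1) * t) *
      (lam1 / mu1) ^ (((n1 : ℝ) - (k1 : ℝ)) / 2)) *
  (Real.exp (-(lam2 + mu2) * t) * besselI (n2 - k2) (2 * Real.sqrt (lam2 * mu2) * t) *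
      (lam2 / mu2) ^ (((n2 : ℝ) - (k2 : ℝ)) / 2))

/-- The first-passage-time density through the line `x₂ = x₁ + r`:
`h_r(t|k) = (|k₂−k₁−r|/t) · P{X₂(t) = X₁(t)+r | X(0)=k}`. -/
noncomputable def hFPT (lam1 mu1 lam2 mu2 : ℝ) (r k1 k2 : ℤ) (t : ℝ) : ℝ :=
  ((|k2 - k1 - r| : ℤ) : ℝ) / t * ∑' x : ℤ, P2 lam1 mu1 lam2 mu2 k1 k2 x (x + r) t

theorem fpt_line_quasi_symmetry
    (lam1 mu1 lam2 mu2 xi : ℝ)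
    (h1 : 0 < lam1) (h2 : 0 < mu1) (h3 : 0 < lam2) (h4 : 0 < mu2) (hxi : 0 < xi)
    (hl : lam1 / lam2 = xi) (hm : mu2 / mu1 = xi)
    (r k1 k2 : ℤ) (hk : k2 ≠ k1 + r) :
    ∀ t : ℝ, 0 < t →
      hFPT lam1 mu1 lam2 mu2 r (k2 - r) (k1 + r) t =
        xi ^ (k1 + r - k2) * hFPT lam1 mu1 lam2 mu2 r k1 k2 t := by
  intro t ht
  have hlam1 : lam1 = xi * lam2 := by
    field_simp at hl; linarith
  have hmu2 : mu2 = xi * mu1 := by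
    field_simp at hm; linarith
  have hq : (0:ℝ) < lam2 / mu2 := div_pos h3 h4
  have h2' : xi ^ (2:ℝ) = xi ^ 2 := by
    rw [show (2:ℝ) = ((2:ℕ):ℝ) by norm_num, Real.rpow_natCast]
  have hp : lam1 / mu1 = xi ^ (2:ℝ) * (lam2 / mu2) := by
    rw [h2', hlam1, hmu2]; field_simp
  have hmul : lam1 * mu1 = lam2 * mu2 := by
    rw [hlam1, hmu2]; ring
  have L : ∀ A B : ℝ, (xi ^ (2:ℝ) * (lam2/mu2)) ^ A * (lam2/mu2) ^ B
      = xi ^ (2*A) * (lam2/mu2) ^ (A+B) := by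
    intro A B
    rw [Real.mul_rpow (Real.rpow_nonneg hxi.le _) hq.le,
      ← Real.rpow_mul hxi.le, mul_assoc, ← Real.rpow_add hq]

  have key : ∀ x : ℤ, P2 lam1 mu1 lam2 mu2 (k2 - r) (k1 + r) x (x + r) t
      = xi ^ (k1 + r - k2) * P2 lam1 mu1 lam2 mu2 k1 k2 x (x + r) t := by
    intro x
    unfold P2
    rw [show x - (k2 - r) = x + r - k2 by ring, show x + r - (k1 + r) = x - k1 by ring,
      hmul, hp]
    rw [show (((x:ℤ):ℝ) - ((k2 - r : ℤ):ℝ)) / 2 = (((x:ℝ) + r - k2 + ((x:ℝ) - k1))/2) - ((x:ℝ)-k1)/2 by push_cast; ring]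
    rw [show ((((x + r : ℤ)):ℝ) - ((k1 + r : ℤ):ℝ)) / 2 = ((x:ℝ)-k1)/2 by push_cast; ring]
    rw [show ((((x + r : ℤ)):ℝ) - ((k2:ℤ):ℝ)) / 2 = (((x:ℝ) + r - k2 + ((x:ℝ) - k1))/2) - ((x:ℝ)-k1)/2 by push_cast; ring]
    set A := ((x:ℝ) + (r:ℝ) - (k2:ℝ) + ((x:ℝ) - (k1:ℝ)))/2 with hA
    set B := ((x:ℝ) - (k1:ℝ))/2 with hB
    have hz : xi ^ (k1 + r - k2) = xi ^ (((k1 + r - k2 : ℤ):ℝ)) := by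
      rw [Real.rpow_intCast]
    have e2 : xi ^ (2*(A-B)) = xi ^ (((k1 + r - k2 : ℤ):ℝ)) * xi ^ (2*B) := by
      rw [← Real.rpow_add hxi]
      congr 1
      rw [hA, hB]; push_cast; ring
    have e1 : (xi ^ (2:ℝ) * (lam2/mu2)) ^ (A - B) * (lam2/mu2) ^ B
        = xi ^ (((k1 + r - k2 : ℤ):ℝ)) * ((xi ^ (2:ℝ) * (lam2/mu2)) ^ B * (lam2/mu2) ^ (A - B)) := by
      rw [L (A-B) B, L B (A-B), e2, show A-B+B = B+(A-B) by ring]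
      ring
    rw [hz]
    linear_combination (Real.exp (-(lam1+mu1)*t) * Real.exp (-(lam2+mu2)*t) *
      besselI (x+r-k2) (2*Real.sqrt (lam2*mu2)*t) *
      besselI (x-k1) (2*Real.sqrt (lam2*mu2)*t)) * e1
  unfold hFPT
  rw [tsum_congr key, tsum_mul_left]
  rw [show (k1 + r) - (k2 - r) - r = -(k2 - k1 - r) by ring, abs_neg]
  ring
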